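/- In a one-sided compliance instrumental variable setting where Z is randomized (Z ⫫ (Y¹, Y⁰, A^{z=0}, A^{z=1})), exclusion holds (Y^{a,z} = Yᵃ), consistency holds, and A^{z=0} = 0 a.s. (those assigned Z=0 cannot take treatment), the average treatment effect on the treated is point-identified: E[Y¹ − Y⁰ | A=1] = E[Y | Z=1, A=1] − (E[Y | Z=0] − E[Y·1{A=0} | Z=1]) / P(A=1 | Z=1), where A denotes the treatment received and all conditioning events have positive probability. -/

import Mathlib

open scoped Classical
open Finset

noncomputable def pr {Ω : Type*} [Fintype Ω] (p : Ω → ℝ) (E : Ω → Prop) : ℝ :=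
  ∑ ω, if E ω then p ω else 0

noncomputable def cex {Ω : Type*} [Fintype Ω] (p : Ω → ℝ) (f : Ω → ℝ) (E : Ω → Prop) : ℝ :=
  (∑ ω, if E ω then p ω * f ω else 0) / pr p E

noncomputable def ex {Ω : Type*} [Fintype Ω] (p : Ω → ℝ) (f : Ω → ℝ) : ℝ :=
  ∑ ω, p ω * f ω

noncomputable def cpr {Ω : Type*} [Fintype Ω] (p : Ω → ℝ) (E F : Ω → Prop) : ℝ :=
  pr p (fun ω => E ω ∧ F ω) / pr p F

/-- Balke–Pearl one-sided-compliance IV setting: with a randomized instrument `Z`,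
exclusion, consistency, and one-sided compliance `A^{z=0} = 0` a.s., the average
treatment effect on the treated is point-identified. -/
theorem stmt19
    {Ω : Type*} [Fintype Ω]
    (p : Ω → ℝ) (hp : ∀ ω, 0 ≤ p ω) (hsum : ∑ ω, p ω = 1)
    (Y : Bool → Ω → ℝ) (Yo : Ω → ℝ) (A Z : Ω → Bool) (Az : Bool → Ω → Bool)
    -- received treatment is the compliance potential at the assigned instrument value
    (hAz : ∀ ω, 0 < p ω → A ω = Az (Z ω) ω)
    -- one-sided compliance: A^{z=0} = 0 a.s.
    (honesided : ∀ ω, 0 < p ω → Az false ω = false)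
    -- consistency (with exclusion built in: potential outcomes indexed by `a` only)
    (hcons : ∀ ω, 0 < p ω → Yo ω = Y (A ω) ω)
    -- randomization: (Y¹, Y⁰, A^{z=1}) jointly independent of Z
    (hrand : ∀ (φ : ℝ → ℝ → Bool → ℝ) (z : Bool),
      ex p (fun ω => φ (Y true ω) (Y false ω) (Az true ω) *
        (if Z ω = z then 1 else 0)) =
      ex p (fun ω => φ (Y true ω) (Y false ω) (Az true ω)) *
        pr p (fun ω => Z ω = z))
    -- positivity of the conditioning events
    (hZpos : ∀ z, pr p (fun ω => Z ω = z) > 0)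
    (hApos : cpr p (fun ω => A ω = true) (fun ω => Z ω = true) > 0) :
    cex p (fun ω => Y true ω - Y false ω) (fun ω => A ω = true) =
      cex p Yo (fun ω => Z ω = true ∧ A ω = true) -
      (cex p Yo (fun ω => Z ω = false) -
        cex p (fun ω => Yo ω * (if A ω = false then 1 else 0))
          (fun ω => Z ω = true)) /
      cpr p (fun ω => A ω = true) (fun ω => Z ω = true) := by
  classical
  have hq1pos := hZpos true
  have hq0pos := hZpos false
  set q1 := pr p (fun ω => Z ω = true) with hq1
  set q0 := pr p (fun ω => Z ω = false) with hq0
  set PS := ∑ ω, if Az true ω = true then p ω else 0 with hPS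
  set N1 := ∑ ω, if Az true ω = true then p ω * Y true ω else 0 with hN1
  set N0 := ∑ ω, if Az true ω = true then p ω * Y false ω else 0 with hN0
  set N0c := ∑ ω, if Az true ω = false then p ω * Y false ω else 0 with hN0c
  set EY0 := ∑ ω, p ω * Y false ω with hEY0
  have hsplit : EY0 = N0 + N0c := by
    rw [hEY0, hN0, hN0c, ← Finset.sum_add_distrib]
    refine Finset.sum_congr rfl fun ω _ => ?_
    by_cases h : Az true ω = true <;> simp [h]
  -- claim: pr (A = 1 ∧ Z = 1) family
  have c1 : pr p (fun ω => A ω = true ∧ Z ω = true) = PS * q1 := by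
    have h := hrand (fun _ _ s => if s then (1:ℝ) else 0) true
    have hl : ex p (fun ω => (if Az true ω then (1:ℝ) else 0) *
        (if Z ω = true then 1 else 0)) = pr p (fun ω => A ω = true ∧ Z ω = true) := by
      unfold ex pr
      refine Finset.sum_congr rfl fun ω _ => ?_
      dsimp only
      rcases (hp ω).lt_or_eq with hω | hω
      · simp only [hAz ω hω]
        cases hZ : Z ω <;> cases hS : Az true ω <;>
          simp [hZ, hS, honesided ω hω]
      · simp [← hω]
    have hr : ex p (fun ω => if Az true ω then (1:ℝ) else 0) = PS := by
      unfold ex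
      rw [hPS]
      refine Finset.sum_congr rfl fun ω _ => ?_
      dsimp only
      by_cases h' : Az true ω = true <;> simp [h']
    rw [hl, hr] at h
    rw [← hq1] at h
    exact h
  have c1' : pr p (fun ω => A ω = true) = PS * q1 := by
    rw [← c1]
    unfold pr
    refine Finset.sum_congr rfl fun ω _ => ?_
    dsimp only
    rcases (hp ω).lt_or_eq with hω | hω
    · simp only [hAz ω hω]
      cases hZ : Z ω <;> cases hS : Az true ω <;>
        simp [hZ, hS, honesided ω hω]
    · simp [← hω]
  have c1'' : pr p (fun ω => Z ω = true ∧ A ω = true) = PS * q1 := by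
    rw [← c1]
    unfold pr
    refine Finset.sum_congr rfl fun ω _ => ?_
    dsimp only
    by_cases h1 : A ω = true <;> by_cases h2 : Z ω = true <;> simp [h1, h2, and_comm]
  -- claim: LHS numerator
  have c2 : (∑ ω, @ite ℝ (A ω = true) (Classical.propDecidable _) (p ω * (Y true ω - Y false ω)) 0)
      = (N1 - N0) * q1 := by
    have h := hrand (fun y1 y0 s => if s then y1 - y0 else 0) true
    have hl : ex p (fun ω => (if Az true ω then Y true ω - Y false ω else 0) *
        (if Z ω = true then 1 else 0)) =
        (∑ ω, @ite ℝ (A ω = true) (Classical.propDecidable _) (p ω * (Y true ω - Y false ω)) 0) := by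
      unfold ex
      refine Finset.sum_congr rfl fun ω _ => ?_
      dsimp only
      rcases (hp ω).lt_or_eq with hω | hω
      · rw [hAz ω hω]
        cases hZ : Z ω <;> cases hS : Az true ω <;>
          simp [hZ, hS, honesided ω hω]
      · simp [← hω]
    have hr : ex p (fun ω => if Az true ω then Y true ω - Y false ω else 0)
        = N1 - N0 := by
      unfold ex
      rw [hN1, hN0, ← Finset.sum_sub_distrib]
      refine Finset.sum_congr rfl fun ω _ => ?_
      dsimp only
      by_cases h' : Az true ω = true <;> simp [h', mul_sub]
    rw [hl, hr] at h
    exact h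
  -- claim: first RHS numerator
  have c3 : (∑ ω, @ite ℝ (Z ω = true ∧ A ω = true) (Classical.propDecidable _) (p ω * Yo ω) 0)
      = N1 * q1 := by
    have h := hrand (fun y1 _ s => if s then y1 else 0) true
    have hl : ex p (fun ω => (if Az true ω then Y true ω else 0) *
        (if Z ω = true then 1 else 0)) =
        (∑ ω, @ite ℝ (Z ω = true ∧ A ω = true) (Classical.propDecidable _) (p ω * Yo ω) 0) := by
      unfold ex
      refine Finset.sum_congr rfl fun ω _ => ?_
      dsimp only
      rcases (hp ω).lt_or_eq with hω | hω
      · rw [hcons ω hω, hAz ω hω]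
        cases hZ : Z ω <;> cases hS : Az true ω <;>
          simp [hZ, hS, honesided ω hω]
      · simp [← hω]
    have hr : ex p (fun ω => if Az true ω then Y true ω else 0) = N1 := by
      unfold ex
      rw [hN1]
      refine Finset.sum_congr rfl fun ω _ => ?_
      dsimp only
      by_cases h' : Az true ω = true <;> simp [h']
    rw [hl, hr] at h
    exact h
  -- claim: E[Yo | Z = 0] numerator
  have c4 : (∑ ω, @ite ℝ (Z ω = false) (Classical.propDecidable _) (p ω * Yo ω) 0) = EY0 * q0 := by
    have h := hrand (fun _ y0 _ => y0) false
    have hl : ex p (fun ω => Y false ω * (if Z ω = false then 1 else 0)) =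
        (∑ ω, @ite ℝ (Z ω = false) (Classical.propDecidable _) (p ω * Yo ω) 0) := by
      unfold ex
      refine Finset.sum_congr rfl fun ω _ => ?_
      dsimp only
      rcases (hp ω).lt_or_eq with hω | hω
      · rw [hcons ω hω, hAz ω hω]
        cases hZ : Z ω <;> simp [hZ, honesided ω hω]
      · simp [← hω]
    have hr : ex p (fun ω => Y false ω) = EY0 := rfl
    rw [hl, hr] at h
    exact h
  -- claim: E[Yo 1{A=0} | Z=1] numerator
  have c5 : (∑ ω, @ite ℝ (Z ω = true) (Classical.propDecidable _) (p ω * (Yo ω * (if A ω = false then 1 else 0))) 0) = N0c * q1 := by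
    have h := hrand (fun _ y0 s => if s then 0 else y0) true
    have hl : ex p (fun ω => (if Az true ω then 0 else Y false ω) *
        (if Z ω = true then 1 else 0)) =
        (∑ ω, @ite ℝ (Z ω = true) (Classical.propDecidable _) (p ω * (Yo ω * (if A ω = false then 1 else 0))) 0) := by
      unfold ex
      refine Finset.sum_congr rfl fun ω _ => ?_
      dsimp only
      rcases (hp ω).lt_or_eq with hω | hω
      · rw [hcons ω hω, hAz ω hω]
        cases hZ : Z ω <;> cases hS : Az true ω <;>
          simp [hZ, hS, honesided ω hω]
      · simp [← hω]
    have hr : ex p (fun ω => if Az true ω then 0 else Y false ω) = N0c := by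
      unfold ex
      rw [hN0c]
      refine Finset.sum_congr rfl fun ω _ => ?_
      dsimp only
      by_cases h' : Az true ω = true <;> simp [h']
    rw [hl, hr] at h
    exact h
  -- cpr simplification and positivity of PS
  have c6 : cpr p (fun ω => A ω = true) (fun ω => Z ω = true) = PS := by
    unfold cpr
    rw [c1]
    field_simp
    exact mul_div_cancel_right₀ PS (ne_of_gt hq1pos)
  have hPSpos : 0 < PS := by rw [c6] at hApos; exact hApos
  have hq1ne : q1 ≠ 0 := ne_of_gt hq1pos
  have hq0ne : q0 ≠ 0 := ne_of_gt hq0pos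
  have hPSne : PS ≠ 0 := ne_of_gt hPSpos
  unfold cex
  dsimp only
  rw [c6, ← hq1, ← hq0, c1', c1'', c2, c3, c4, c5]
  rw [hsplit]
  field_simp
  ring
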